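/- For every integer k ≥ 1 and every integer m with 1 ≤ m < 2^k, the series ∑_{n=1}^{∞} f_k(n+m)/n gives the greedy representation of U_{k,m}; that is, s_n(U_{k,m}) = f_k(n+m) for all n ≥ 1. In particular, U_{k,m} ∈ X_k. -/

import Mathlib

open Filter

/-- Greedy partial sums: `gSigma τ n = σ_n(τ)`. -/
noncomputable def gSigma (τ : ℝ) : ℕ → ℝ
  | 0 => 0
  | n + 1 => gSigma τ n + (if gSigma τ n ≤ τ then (1 : ℝ) else -1) / (n + 1)

/-- Greedy signs: for `n ≥ 1`, `gSign τ n = s_n(τ)`. -/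
noncomputable def gSign (τ : ℝ) (n : ℕ) : ℝ :=
  if gSigma τ (n - 1) ≤ τ then 1 else -1

/-- Thue–Morse signs: `tmSign n = ε_n`. -/
noncomputable def tmSign (n : ℕ) : ℝ := (-1 : ℝ) ^ (Nat.digits 2 n).sum

/-- `fPer k` is the `2^k`-periodic function with `fPer k n = ε_n` for `0 ≤ n < 2^k`. -/
noncomputable def fPer (k n : ℕ) : ℝ := tmSign (n % 2 ^ k)


open Finset

lemma tmSign_zero : tmSign 0 = 1 := by simp [tmSign]

lemma tmSign_two_mul (n : ℕ) : tmSign (2 * n) = tmSign n := by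
  rcases Nat.eq_zero_or_pos n with h | h
  · simp [h]
  · rw [tmSign, Nat.digits_def' (by norm_num) (by omega)]
    simp [Nat.mul_div_cancel_left _ (by norm_num : 0 < 2), Nat.mul_mod_right, tmSign]

lemma tmSign_two_mul_add_one (n : ℕ) : tmSign (2 * n + 1) = -tmSign n := by
  rw [tmSign, Nat.digits_def' (by norm_num) (by omega)]
  have h1 : (2 * n + 1) % 2 = 1 := by omega
  have h2 : (2 * n + 1) / 2 = n := by omega
  rw [h1, h2]
  simp [tmSign, pow_succ, pow_add, mul_comm]

lemma tmSign_eq_or (n : ℕ) : tmSign n = 1 ∨ tmSign n = -1 := by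
  rw [tmSign]; rcases Nat.even_or_odd (Nat.digits 2 n).sum with h | h
  · left; exact h.neg_one_pow
  · right; exact h.neg_one_pow

lemma two_mul_mod (u K : ℕ) : (2 * u) % 2 ^ (K + 1) = 2 * (u % 2 ^ K) := by
  rw [pow_succ, mul_comm (2 ^ K) 2, Nat.mul_mod_mul_left]

lemma two_mul_add_one_mod (u K : ℕ) : (2 * u + 1) % 2 ^ (K + 1) = 2 * (u % 2 ^ K) + 1 := by
  have h : 2 * u % 2 ^ (K+1) = 2 * (u % 2 ^ K) := two_mul_mod u K
  have h2 : 2 * (u % 2 ^ K) + 1 < 2 ^ (K + 1) := by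
    have h3 : u % 2 ^ K < 2 ^ K := Nat.mod_lt u (Nat.pow_pos (by norm_num))
    rw [pow_succ]; omega
  have hu := Nat.div_add_mod u (2 ^ K)
  have h6 : 2 * u + 1 = (2 * (u % 2 ^ K) + 1) + (u / 2 ^ K) * 2 ^ (K + 1) := by
    conv_lhs => rw [← hu]
    rw [pow_succ]; ring
  rw [h6, Nat.add_mul_mod_self_right, Nat.mod_eq_of_lt h2]

lemma fPer_two_mul (K u : ℕ) : fPer (K + 1) (2 * u) = fPer K u := by
  rw [fPer, two_mul_mod, tmSign_two_mul, fPer]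

lemma fPer_two_mul_add_one (K u : ℕ) : fPer (K + 1) (2 * u + 1) = -fPer K u := by
  rw [fPer, two_mul_add_one_mod, tmSign_two_mul_add_one, fPer]

lemma fPer_eq_or (k n : ℕ) : fPer k n = 1 ∨ fPer k n = -1 := tmSign_eq_or _

lemma fPer_sq (k n : ℕ) : fPer k n * fPer k n = 1 := by
  rcases fPer_eq_or k n with h | h <;> rw [h] <;> norm_num

lemma abs_fPer (k n : ℕ) : |fPer k n| = 1 := by
  rcases fPer_eq_or k n with h | h <;> rw [h] <;> norm_num

/-- Forward difference (negated): `dlt d t = d t - d (t+1)`. -/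
def dlt (d : ℕ → ℝ) (t : ℕ) : ℝ := d t - d (t + 1)

/-- Completely monotone: all iterated differences are positive. -/
def CM (d : ℕ → ℝ) : Prop := ∀ i t, 0 < dlt^[i] d t

lemma CM.pos {d : ℕ → ℝ} (h : CM d) (t : ℕ) : 0 < d t := h 0 t

lemma CM.strict {d : ℕ → ℝ} (h : CM d) (t : ℕ) : d (t + 1) < d t := by
  have := h 1 t; simp only [Function.iterate_one, dlt] at this; linarith

lemma CM.anti {d : ℕ → ℝ} (h : CM d) : ∀ s t, s ≤ t → d t ≤ d s := by
  intro s t hst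
  induction t with
  | zero => simp_all
  | succ n ih =>
    rcases Nat.lt_or_ge s (n+1) with h1 | h1
    · exact le_trans (le_of_lt (h.strict n)) (ih (by omega))
    · have : s = n + 1 := by omega
      simp [this]

lemma CM.diff {d : ℕ → ℝ} (h : CM d) : CM (dlt d) := by
  intro i t
  have := h (i + 1) t
  rwa [Function.iterate_succ_apply] at this

lemma dlt_iter_double (i : ℕ) : ∀ (d : ℕ → ℝ) (t : ℕ),
    dlt^[i] (fun s => d (2 * s)) t
      = ∑ j ∈ range (i + 1), (i.choose j : ℝ) * dlt^[i] d (2 * t + j) := by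
  induction i with
  | zero => intro d t; simp
  | succ i ih =>
    intro d t
    rw [Function.iterate_succ_apply']
    set B := dlt^[i + 1] d with hB
    have hA : ∀ x, dlt^[i] d x - dlt^[i] d (x + 2) = B x + B (x + 1) := by
      intro x
      have h1 : B x = dlt^[i] d x - dlt^[i] d (x + 1) := by
        rw [hB, Function.iterate_succ_apply']; rfl
      have h2 : B (x + 1) = dlt^[i] d (x + 1) - dlt^[i] d (x + 2) := by
        rw [hB, Function.iterate_succ_apply']; rfl
      rw [h1, h2]; ring
    have key : dlt (dlt^[i] fun s => d (2 * s)) t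
        = ∑ j ∈ range (i + 1), (i.choose j : ℝ) * (B (2 * t + j) + B (2 * t + j + 1)) := by
      show dlt^[i] (fun s => d (2*s)) t - dlt^[i] (fun s => d (2*s)) (t+1) = _
      rw [ih d t, ih d (t + 1), ← Finset.sum_sub_distrib]
      refine Finset.sum_congr rfl fun j _ => ?_
      have e : 2 * (t + 1) + j = 2 * t + j + 2 := by ring
      rw [e, ← mul_sub, hA (2 * t + j)]
    rw [key]
    -- expand both sides
    have lhs_split : ∑ j ∈ range (i + 1), (i.choose j : ℝ) * (B (2*t+j) + B (2*t+j+1))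
        = (∑ j ∈ range (i + 1), (i.choose j : ℝ) * B (2*t+j))
          + ∑ j ∈ range (i + 1), (i.choose j : ℝ) * B (2*t+j+1) := by
      rw [← Finset.sum_add_distrib]; exact Finset.sum_congr rfl fun j _ => by ring
    rw [lhs_split]
    rw [Finset.sum_range_succ' (fun j => (i.choose j : ℝ) * B (2*t+j)) i]
    rw [Finset.sum_range_succ (fun j => (i.choose j : ℝ) * B (2*t+j+1)) i]
    rw [Finset.sum_range_succ' (fun j => ((i+1).choose j : ℝ) * B (2*t+j)) (i+1)]
    rw [Finset.sum_range_succ (fun j => ((i+1).choose (j+1) : ℝ) * B (2*t+(j+1))) i]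
    simp only [Nat.choose_zero_right, Nat.choose_self, Nat.cast_one, one_mul]
    have hch : ∀ j, ((i+1).choose (j+1) : ℝ) = (i.choose j : ℝ) + (i.choose (j+1) : ℝ) := by
      intro j; rw [Nat.choose_succ_succ]; push_cast; ring
    have : ∑ j ∈ range i, ((i+1).choose (j+1) : ℝ) * B (2*t+(j+1))
        = (∑ j ∈ range i, (i.choose (j+1) : ℝ) * B (2*t+j+1))
          + ∑ j ∈ range i, (i.choose j : ℝ) * B (2*t+j+1) := by
      rw [← Finset.sum_add_distrib]
      refine Finset.sum_congr rfl fun j _ => ?_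
      rw [hch j]; ring_nf
    rw [this]
    have e1 : 2*t+(i+1) = 2*t+i+1 := by ring
    rw [e1]
    simp only [← Nat.add_assoc]
    ring

lemma CM.double {d : ℕ → ℝ} (h : CM d) : CM (fun s => d (2 * s)) := by
  intro i t
  rw [dlt_iter_double]
  apply Finset.sum_pos
  · intro j hj
    apply mul_pos
    · exact_mod_cast Nat.cast_pos.mpr (Nat.choose_pos (by simpa using Nat.lt_succ_iff.mp (mem_range.mp hj)))
    · exact h i _
  · exact Finset.nonempty_range_iff.mpr (by omega)

/-- The paired sequence `t ↦ d (2t) - d (2t+1)`. -/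
def dpair (d : ℕ → ℝ) (t : ℕ) : ℝ := d (2 * t) - d (2 * t + 1)

lemma dpair_eq (d : ℕ → ℝ) : dpair d = fun s => (dlt d) (2 * s) := rfl

lemma CM.dpair {d : ℕ → ℝ} (h : CM d) : CM (dpair d) := by
  rw [dpair_eq]; exact h.diff.double

lemma CM.shift {d : ℕ → ℝ} (h : CM d) : CM (fun s => d (s + 1)) := by
  have key : ∀ i (e : ℕ → ℝ), dlt^[i] (fun s => e (s + 1)) = fun t => dlt^[i] e (t + 1) := by
    intro i
    induction i with
    | zero => intro e; rfl
    | succ i ih =>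
      intro e
      rw [Function.iterate_succ_apply, Function.iterate_succ_apply]
      have : dlt (fun s => e (s + 1)) = fun s => (dlt e) (s + 1) := rfl
      rw [this, ih]
  intro i t; rw [key]; exact h i (t + 1)

noncomputable def Pprod (x : ℝ) (n : ℕ) : ℝ := ∏ j ∈ range n, (x + j)⁻¹

lemma Pprod_pos {x : ℝ} (hx : 0 < x) (n : ℕ) : 0 < Pprod x n :=
  Finset.prod_pos fun j _ => by positivity

lemma Pprod_succ_left (x : ℝ) (n : ℕ) : Pprod x (n + 1) = x⁻¹ * Pprod (x + 1) n := by
  rw [Pprod, Finset.prod_range_succ' (fun j => (x + (j:ℕ))⁻¹) n]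
  have h : (∏ j ∈ range n, (x + ((j:ℕ) + 1 : ℕ))⁻¹) = Pprod (x + 1) n := by
    refine Finset.prod_congr rfl fun j _ => ?_
    push_cast; ring_nf
  rw [h]
  norm_num [mul_comm]

lemma Pprod_succ_right (x : ℝ) (n : ℕ) : Pprod x (n + 1) = Pprod x n * (x + n)⁻¹ := by
  rw [Pprod, Finset.prod_range_succ, Pprod]

lemma CM_inv (β : ℝ) (hβ : 0 < β) : CM (fun t : ℕ => 1 / (β + t)) := by
  have key : ∀ i t, dlt^[i] (fun t : ℕ => 1 / (β + t)) t
      = (Nat.factorial i : ℝ) * Pprod (β + t) (i + 1) := by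
    intro i
    induction i with
    | zero => intro t; simp [Pprod, one_div]
    | succ i ih =>
      intro t
      rw [Function.iterate_succ_apply']
      have hd : dlt (dlt^[i] fun t : ℕ => 1 / (β + t)) t
          = dlt^[i] (fun t : ℕ => 1 / (β + t)) t - dlt^[i] (fun t : ℕ => 1 / (β + t)) (t + 1) := rfl
      rw [hd, ih t, ih (t + 1)]
      have hc : β + ((t:ℕ) + 1 : ℕ) = β + t + 1 := by push_cast; ring
      rw [hc]
      have ha : (0:ℝ) < β + t := by positivity
      have hb : (0:ℝ) < β + t + 1 + i := by positivity
      have hQpos : 0 < Pprod (β + t + 1) i := Pprod_pos (by positivity) i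
      rw [Pprod_succ_left (β + t) i, Pprod_succ_right (β + t + 1) i,
        show i + 1 + 1 = (i + 1) + 1 from rfl, Pprod_succ_left (β + t) (i + 1),
        Pprod_succ_right (β + t + 1) i, Nat.factorial_succ]
      push_cast
      field_simp
      ring
  intro i t
  rw [key]
  have h1 : (0:ℝ) < Nat.factorial i := by exact_mod_cast Nat.factorial_pos i
  exact mul_pos h1 (Pprod_pos (by positivity) (i + 1))

lemma tendsto_of_even_odd {S : ℕ → ℝ} {T : ℝ}
    (he : Tendsto (fun n => S (2 * n)) atTop (nhds T))
    (ho : Tendsto (fun n => S (2 * n + 1)) atTop (nhds T)) :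
    Tendsto S atTop (nhds T) := by
  rw [Metric.tendsto_atTop] at he ho ⊢
  intro ε hε
  obtain ⟨N1, h1⟩ := he ε hε
  obtain ⟨N2, h2⟩ := ho ε hε
  refine ⟨2 * (max N1 N2) + 1, fun n hn => ?_⟩
  rcases Nat.even_or_odd n with ⟨t, ht⟩ | ⟨t, ht⟩
  · have hn' : n = 2 * t := by omega
    subst hn'
    exact h1 t (by omega)
  · have hn' : n = 2 * t + 1 := by omega
    subst hn'
    exact h2 t (by omega)

lemma sum_pair (K v : ℕ) (d : ℕ → ℝ) (N : ℕ) :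
    ∑ j ∈ range (2 * N), fPer (K + 1) (2 * v + j) * d j
      = ∑ t ∈ range N, fPer K (v + t) * dpair d t := by
  induction N with
  | zero => simp
  | succ N ih =>
    have h2 : 2 * (N + 1) = (2 * N + 1) + 1 := by ring
    rw [h2, Finset.sum_range_succ, Finset.sum_range_succ, ih, Finset.sum_range_succ]
    have e1 : 2 * v + 2 * N = 2 * (v + N) := by ring
    have e2 : 2 * v + (2 * N + 1) = 2 * (v + N) + 1 := by ring
    rw [e1, e2, fPer_two_mul, fPer_two_mul_add_one, dpair]
    ring

lemma sum_bound (K v : ℕ) (d : ℕ → ℝ) (hcm : CM d) (n : ℕ) :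
    |∑ j ∈ range n, fPer (K + 1) (2 * v + j) * d j| ≤ d 0 := by
  have tele : ∀ N, ∑ t ∈ range N, dpair d t ≤ d 0 - d (2 * N) := by
    intro N
    have : ∀ t ∈ range N, dpair d t ≤ d (2 * t) - d (2 * (t + 1)) := by
      intro t _
      have := hcm.anti (2 * t + 1) (2 * (t + 1)) (by omega)
      rw [dpair]; linarith
    calc ∑ t ∈ range N, dpair d t ≤ ∑ t ∈ range N, (d (2 * t) - d (2 * (t + 1))) :=
          Finset.sum_le_sum this
      _ = d (2 * 0) - d (2 * N) := Finset.sum_range_sub' (fun t => d (2 * t)) N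
      _ = d 0 - d (2 * N) := by norm_num
  have heven : ∀ N, |∑ j ∈ range (2 * N), fPer (K + 1) (2 * v + j) * d j| ≤ d 0 - d (2 * N) := by
    intro N
    rw [sum_pair]
    calc |∑ t ∈ range N, fPer K (v + t) * dpair d t|
        ≤ ∑ t ∈ range N, |fPer K (v + t) * dpair d t| := Finset.abs_sum_le_sum_abs _ _
      _ = ∑ t ∈ range N, dpair d t := by
          refine Finset.sum_congr rfl fun t _ => ?_
          rw [abs_mul, abs_fPer, one_mul, abs_of_pos (hcm.dpair.pos t)]
      _ ≤ d 0 - d (2 * N) := tele N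
  rcases Nat.even_or_odd n with ⟨t, ht⟩ | ⟨t, ht⟩
  · have hn' : n = 2 * t := by omega
    subst hn'
    have := heven t
    have := hcm.pos (2 * t)
    linarith [abs_nonneg (∑ j ∈ range (2 * t), fPer (K + 1) (2 * v + j) * d j)]
  · have hn' : n = 2 * t + 1 := by omega
    subst hn'
    rw [Finset.sum_range_succ]
    calc |∑ j ∈ range (2 * t), fPer (K + 1) (2 * v + j) * d j
            + fPer (K + 1) (2 * v + 2 * t) * d (2 * t)|
        ≤ |∑ j ∈ range (2 * t), fPer (K + 1) (2 * v + j) * d j|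
            + |fPer (K + 1) (2 * v + 2 * t) * d (2 * t)| := abs_add_le _ _
      _ ≤ (d 0 - d (2 * t)) + d (2 * t) := by
          refine add_le_add (heven t) ?_
          rw [abs_mul, abs_fPer, one_mul, abs_of_pos (hcm.pos (2 * t))]
      _ = d 0 := by ring

lemma dpair_tendsto {d : ℕ → ℝ} (hcm : CM d) (h0 : Tendsto d atTop (nhds 0)) :
    Tendsto (dpair d) atTop (nhds 0) := by
  have hd2 : Tendsto (fun t => d (2 * t)) atTop (nhds 0) :=
    h0.comp (tendsto_atTop_mono (fun n => by simp only [id_eq]; omega) tendsto_id)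
  have hd2' : Tendsto (fun t => d (2 * t + 1)) atTop (nhds 0) :=
    h0.comp (tendsto_atTop_mono (fun n => by simp only [id_eq]; omega) tendsto_id)
  have := hd2.sub hd2'
  rw [sub_zero] at this; exact this

lemma evenstep (K v : ℕ) (d : ℕ → ℝ) (hcm : CM d) (h0 : Tendsto d atTop (nhds 0))
    (Hhalf : ∃ T, Tendsto (fun N => ∑ t ∈ range N, fPer K (v + t) * dpair d t) atTop (nhds T)
      ∧ 0 < fPer K v * T) :
    ∃ T, Tendsto (fun n => ∑ j ∈ range n, fPer (K + 1) (2 * v + j) * d j) atTop (nhds T)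
      ∧ 0 < fPer (K + 1) (2 * v) * T ∧ |T| ≤ d 0 := by
  obtain ⟨T, hT, hsign⟩ := Hhalf
  set S : ℕ → ℝ := fun n => ∑ j ∈ range n, fPer (K + 1) (2 * v + j) * d j with hS
  have he : Tendsto (fun N => S (2 * N)) atTop (nhds T) := by
    have : (fun N => S (2 * N)) = fun N => ∑ t ∈ range N, fPer K (v + t) * dpair d t := by
      funext N; exact sum_pair K v d N
    rw [this]; exact hT
  have ho : Tendsto (fun N => S (2 * N + 1)) atTop (nhds T) := by
    have hterm : Tendsto (fun N => fPer (K + 1) (2 * v + 2 * N) * d (2 * N)) atTop (nhds 0) := by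
      have hd2 : Tendsto (fun N => d (2 * N)) atTop (nhds 0) :=
        h0.comp (tendsto_atTop_mono (fun n => by simp only [id_eq]; omega) tendsto_id)
      rw [Metric.tendsto_atTop] at hd2 ⊢
      intro ε hε
      obtain ⟨N0, hN0⟩ := hd2 ε hε
      refine ⟨N0, fun n hn => ?_⟩
      have := hN0 n hn
      simp only [Real.dist_eq, sub_zero] at this ⊢
      rw [abs_mul, abs_fPer, one_mul]
      exact this
    have : (fun N => S (2 * N + 1)) = fun N => S (2 * N) + fPer (K + 1) (2 * v + 2 * N) * d (2 * N) := by
      funext N; rw [hS]; exact Finset.sum_range_succ _ _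
    rw [this]
    simpa using he.add hterm
  refine ⟨T, tendsto_of_even_odd he ho, ?_, ?_⟩
  · rw [fPer_two_mul]; exact hsign
  · have habs : Tendsto (fun n => |S n|) atTop (nhds |T|) := (tendsto_of_even_odd he ho).abs
    exact le_of_tendsto habs (Filter.Eventually.of_forall fun n => sum_bound K v d hcm n)

lemma fPer_zero_level (n : ℕ) : fPer 0 n = 1 := by
  rw [fPer, pow_zero, Nat.mod_one, tmSign_zero]

lemma level0 (v : ℕ) (d : ℕ → ℝ) (hcm : CM d) :
    ∃ T, Tendsto (fun N => ∑ t ∈ range N, fPer 0 (v + t) * dpair d t) atTop (nhds T)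
      ∧ 0 < fPer 0 v * T := by
  have hsimp : (fun N => ∑ t ∈ range N, fPer 0 (v + t) * dpair d t)
      = fun N => ∑ t ∈ range N, dpair d t := by
    funext N; exact Finset.sum_congr rfl fun t _ => by rw [fPer_zero_level, one_mul]
  have hmono : Monotone (fun N => ∑ t ∈ range N, dpair d t) := by
    intro a b hab
    exact Finset.sum_le_sum_of_subset_of_nonneg (Finset.range_subset_range.mpr hab)
      (fun t _ _ => le_of_lt (hcm.dpair.pos t))
  have hbdd : BddAbove (Set.range fun N => ∑ t ∈ range N, dpair d t) := by
    refine ⟨d 0, ?_⟩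
    rintro x ⟨N, rfl⟩
    have : ∀ t ∈ range N, dpair d t ≤ d (2 * t) - d (2 * (t + 1)) := by
      intro t _
      have := hcm.anti (2 * t + 1) (2 * (t + 1)) (by omega)
      rw [dpair]; linarith
    calc ∑ t ∈ range N, dpair d t ≤ ∑ t ∈ range N, (d (2 * t) - d (2 * (t + 1))) :=
        Finset.sum_le_sum this
      _ = d (2 * 0) - d (2 * N) := Finset.sum_range_sub' (fun t => d (2 * t)) N
      _ ≤ d 0 := by have := hcm.pos (2 * N); norm_num; linarith
  have hconv := tendsto_atTop_ciSup hmono hbdd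
  refine ⟨_, by rw [hsimp]; exact hconv, ?_⟩
  rw [fPer_zero_level, one_mul]
  have h1 : dpair d 0 ≤ ⨆ N, ∑ t ∈ range N, dpair d t := by
    have : dpair d 0 = ∑ t ∈ range 1, dpair d t := by simp
    rw [this]
    exact le_ciSup hbdd 1
  exact lt_of_lt_of_le (hcm.dpair.pos 0) h1

lemma oddstep (K v : ℕ) (d : ℕ → ℝ) (hcm : CM d) (h0 : Tendsto d atTop (nhds 0))
    (Heven : ∀ (u : ℕ) (e : ℕ → ℝ), CM e → Tendsto e atTop (nhds 0) →
      ∃ T, Tendsto (fun n => ∑ j ∈ range n, fPer (K + 1) (2 * u + j) * e j) atTop (nhds T)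
        ∧ 0 < fPer (K + 1) (2 * u) * T ∧ |T| ≤ e 0) :
    ∃ T, Tendsto (fun n => ∑ j ∈ range n, fPer (K + 1) (2 * v + 1 + j) * d j) atTop (nhds T)
      ∧ 0 < fPer (K + 1) (2 * v + 1) * T := by
  have hshift0 : Tendsto (fun s => d (s + 1)) atTop (nhds 0) :=
    h0.comp (tendsto_atTop_mono (fun n => by simp only [id_eq]; omega) tendsto_id)
  obtain ⟨T', hT', hsign', hbound'⟩ := Heven (v + 1) (fun s => d (s + 1)) hcm.shift hshift0
  set ε := fPer (K + 1) (2 * v + 1) with hε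
  refine ⟨ε * d 0 + T', ?_, ?_⟩
  · set S : ℕ → ℝ := fun n => ∑ j ∈ range n, fPer (K + 1) (2 * v + 1 + j) * d j with hS
    have hstep : ∀ n, S (n + 1)
        = ε * d 0 + ∑ j ∈ range n, fPer (K + 1) (2 * (v + 1) + j) * d (j + 1) := by
      intro n
      show (∑ j ∈ range (n + 1), fPer (K + 1) (2 * v + 1 + j) * d j) = _
      rw [Finset.sum_range_succ' (fun j => fPer (K + 1) (2 * v + 1 + j) * d j) n]
      have : ∀ j, 2 * v + 1 + (j + 1) = 2 * (v + 1) + j := fun j => by ring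
      simp only [this, add_zero]
      rw [hε]
      exact add_comm _ _
    have h1 : Tendsto (fun n => S (n + 1)) atTop (nhds (ε * d 0 + T')) := by
      simp only [hstep]
      exact tendsto_const_nhds.add hT'
    exact (tendsto_add_atTop_iff_nat 1).mp h1
  · have hsq : ε * ε = 1 := fPer_sq _ _
    have habs : |ε| = 1 := abs_fPer _ _
    have h2 : ε * (ε * d 0 + T') = d 0 + ε * T' := by
      rw [mul_add, ← mul_assoc, hsq, one_mul]
    rw [h2]
    have h3 : |ε * T'| ≤ d 1 := by
      rw [abs_mul, habs, one_mul]; exact hbound'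
    have h4 : d 1 < d 0 := hcm.strict 0
    have := abs_le.mp h3
    linarith [this.1]

lemma mainAux : ∀ K v (d : ℕ → ℝ), CM d → Tendsto d atTop (nhds 0) →
    ∃ T, Tendsto (fun n => ∑ j ∈ range n, fPer (K + 1) (2 * v + j) * d j) atTop (nhds T)
      ∧ 0 < fPer (K + 1) (2 * v) * T ∧ |T| ≤ d 0 := by
  intro K
  induction K with
  | zero =>
    intro v d hcm h0
    exact evenstep 0 v d hcm h0 (level0 v d hcm)
  | succ K ih =>
    intro v d hcm h0
    apply evenstep (K + 1) v d hcm h0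
    have hpcm : CM (dpair d) := hcm.dpair
    have hp0 : Tendsto (dpair d) atTop (nhds 0) := dpair_tendsto hcm h0
    rcases Nat.even_or_odd v with ⟨w, hw⟩ | ⟨w, hw⟩
    · have hv : v = 2 * w := by omega
      subst hv
      obtain ⟨T, hT, hsign, _⟩ := ih w (dpair d) hpcm hp0
      exact ⟨T, hT, hsign⟩
    · subst hw
      exact oddstep K w (dpair d) hpcm hp0 (fun u e hce h0e => ih u e hce h0e)

lemma mainAll (K c : ℕ) (d : ℕ → ℝ) (hcm : CM d) (h0 : Tendsto d atTop (nhds 0)) :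
    ∃ T, Tendsto (fun n => ∑ j ∈ range n, fPer (K + 1) (c + j) * d j) atTop (nhds T)
      ∧ 0 < fPer (K + 1) c * T := by
  rcases Nat.even_or_odd c with ⟨w, hw⟩ | ⟨w, hw⟩
  · have hc : c = 2 * w := by omega
    subst hc
    obtain ⟨T, hT, hsign, _⟩ := mainAux K w d hcm h0
    exact ⟨T, hT, hsign⟩
  · subst hw
    exact oddstep K w d hcm h0 (fun u e hce h0e => mainAux K u e hce h0e)

/-- `U_{k,m} = ∑_{n=1}^∞ f_k(n+m)/n` (limit of partial sums). -/
noncomputable def Uconst (k m : ℕ) : ℝ :=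
  limUnder atTop (fun N : ℕ => ∑ n ∈ Finset.Icc 1 N, fPer k (n + m) / (n : ℝ))

/-- The exceptional set `X_k`. -/
def Xset (k : ℕ) : Set ℝ :=
  {τ | ∃ N m : ℕ, m < 2 ^ k ∧ ∀ n : ℕ, 1 ≤ n → N ≤ n → gSign τ n = fPer k (n + m)}

/-- Corollary 5 of the paper: for `k ≥ 1` and `1 ≤ m < 2^k` the series
`∑ f_k(n+m)/n` is the greedy representation of `U_{k,m}`, i.e.
`s_n(U_{k,m}) = f_k(n+m)` for all `n ≥ 1`; in particular `U_{k,m} ∈ X_k`. -/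
theorem stmt_17 (k : ℕ) (hk : 1 ≤ k) (m : ℕ) (hm1 : 1 ≤ m) (hm : m < 2 ^ k) :
    (∀ n : ℕ, 1 ≤ n → gSign (Uconst k m) n = fPer k (n + m)) ∧
    Uconst k m ∈ Xset k := by

  obtain ⟨K, rfl⟩ : ∃ K, k = K + 1 := ⟨k - 1, by omega⟩
  set w : ℕ → ℝ := fun j => 1 / (1 + (j : ℝ)) with hw
  have cmW : ∀ n : ℕ, CM (fun j => w (n + j)) := by
    intro n
    have h1 : (fun j : ℕ => w (n + j)) = fun t : ℕ => 1 / (((n : ℝ) + 1) + t) := by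
      funext j; rw [hw]; push_cast; ring_nf
    rw [h1]
    exact CM_inv ((n : ℝ) + 1) (by positivity)
  have t0W : ∀ n : ℕ, Tendsto (fun j => w (n + j)) atTop (nhds 0) := by
    intro n
    have h2 : Tendsto (fun j : ℕ => 1 + ((n + j : ℕ) : ℝ)) atTop atTop := by
      apply tendsto_atTop_add_const_left
      exact tendsto_natCast_atTop_atTop.comp
        (tendsto_atTop_mono (fun j => by simp only [id_eq]; omega) tendsto_id)
    simpa [hw, one_div, Pi.inv_def] using h2.inv_tendsto_atTop
  set sig : ℕ → ℝ := fun n => ∑ j ∈ range n, fPer (K + 1) (m + 1 + j) * w j with hsig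
  -- the full series converges to Uconst
  obtain ⟨T0, hT0, _⟩ := mainAll K (m + 1) (fun j => w (0 + j)) (cmW 0) (t0W 0)
  have hT0' : Tendsto sig atTop (nhds T0) := by
    have : (fun n => ∑ j ∈ range n, fPer (K + 1) (m + 1 + j) * w (0 + j)) = sig := by
      funext n; exact Finset.sum_congr rfl fun j _ => by rw [Nat.zero_add]
    rwa [this] at hT0
  have hF : (fun N : ℕ => ∑ n ∈ Finset.Icc 1 N, fPer (K + 1) (n + m) / (n : ℝ)) = sig := by
    funext N
    rw [hsig]
    rw [← Finset.Ico_add_one_right_eq_Icc, Finset.sum_Ico_eq_sum_range]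
    simp only [Nat.add_sub_cancel]
    refine Finset.sum_congr rfl fun j _ => ?_
    have e1 : 1 + j + m = m + 1 + j := by omega
    rw [e1, hw]
    push_cast
    rw [div_eq_mul_one_div]
  have hτ : Uconst (K + 1) m = T0 := by
    rw [Uconst, hF]
    exact hT0'.limUnder_eq
  set τ := Uconst (K + 1) m with hτdef
  have hτT : Tendsto sig atTop (nhds τ) := by rw [hτ]; exact hT0'
  -- tail sign
  have tail : ∀ n : ℕ, 0 < fPer (K + 1) (m + 1 + n) * (τ - sig n) := by
    intro n
    obtain ⟨T, hT, hs⟩ := mainAll K (m + 1 + n) (fun j => w (n + j)) (cmW n) (t0W n)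
    have heq : ∀ N, (∑ j ∈ range N, fPer (K + 1) (m + 1 + n + j) * w (n + j))
        = sig (n + N) - sig n := by
      intro N
      rw [hsig]
      rw [← Finset.sum_Ico_eq_sub (fun j => fPer (K + 1) (m + 1 + j) * w j)
        (Nat.le_add_right n N)]
      rw [Finset.sum_Ico_eq_sum_range]
      simp only [Nat.add_sub_cancel_left]
      refine Finset.sum_congr rfl fun j _ => ?_
      have e1 : m + 1 + (n + j) = m + 1 + n + j := by omega
      rw [e1]
    have hT2 : Tendsto (fun N => sig (n + N) - sig n) atTop (nhds (τ - sig n)) := by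
      apply Tendsto.sub_const
      have := (tendsto_add_atTop_iff_nat n).mpr hτT
      have e2 : (fun N => sig (N + n)) = fun N => sig (n + N) := by
        funext N; rw [Nat.add_comm]
      rwa [e2] at this
    have hTeq : T = τ - sig n := by
      apply tendsto_nhds_unique _ hT2
      have : (fun N => ∑ j ∈ range N, fPer (K + 1) (m + 1 + n + j) * w (n + j))
          = fun N => sig (n + N) - sig n := by funext N; exact heq N
      rwa [this] at hT
    rwa [hTeq] at hs
  -- greedy partial sums agree
  have key : ∀ n : ℕ, gSigma τ n = sig n := by
    intro n
    induction n with
    | zero => simp [gSigma, hsig]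
    | succ n ih =>
      have hdec : (if gSigma τ n ≤ τ then (1 : ℝ) else -1) = fPer (K + 1) (m + 1 + n) := by
        rw [ih]
        rcases fPer_eq_or (K + 1) (m + 1 + n) with hp | hp
        · have := tail n
          rw [hp, one_mul] at this
          rw [if_pos (by linarith), hp]
        · have := tail n
          rw [hp] at this
          have h3 : τ < sig n := by nlinarith
          rw [if_neg (by linarith), hp]
      show gSigma τ n + (if gSigma τ n ≤ τ then (1 : ℝ) else -1) / ((n : ℝ) + 1) = sig (n + 1)
      rw [hdec, ih]
      simp only [hsig, hw]
      rw [Finset.sum_range_succ]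
      push_cast
      rw [div_eq_mul_one_div]
      ring
  have main : ∀ n : ℕ, 1 ≤ n → gSign τ n = fPer (K + 1) (n + m) := by
    intro n hn
    obtain ⟨j, rfl⟩ : ∃ j, n = j + 1 := ⟨n - 1, by omega⟩
    have e1 : j + 1 - 1 = j := by omega
    rw [gSign, e1, key j]
    have e2 : j + 1 + m = m + 1 + j := by omega
    rw [e2]
    rcases fPer_eq_or (K + 1) (m + 1 + j) with hp | hp
    · have := tail j
      rw [hp, one_mul] at this
      rw [if_pos (by linarith), hp]
    · have := tail j
      rw [hp] at this
      have h3 : τ < sig j := by nlinarith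
      rw [if_neg (by linarith), hp]
  exact ⟨main, 1, m, hm, fun n h1 _ => main n h1⟩
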